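/- arXiv:1203.2345 — 6 statements merged into one kernel-verified Lean document; each statement's English description precedes it below -/
import Mathlib

section
/- Let M₀ be a partial linear space and G a cyclic group that is either infinite or of even order greater than 2. Then the map κ = (κ', κ'') defined on ⊛_G(∘, M₀) by κ'((i,x)) = [1−i, x] on points and κ''([i,y]) = (1−i, y) on lines is an involutive correlation of ⊛_G(∘, M₀); consequently ⊛_G(∘, M₀) is self-dual. -/
/-- A partial linear space: every line has at least two points, every point is on
at least two lines, and two distinct points are on at most one common line. -/
def IsPLS {P L : Type*} (inc : P → L → Prop) : Prop :=
  (∀ l, ∃ a b, a ≠ b ∧ inc a l ∧ inc b l) ∧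
  (∀ a, ∃ l m, l ≠ m ∧ inc a l ∧ inc a m) ∧
  (∀ a b l m, inc a l → inc b l → inc a m → inc b m → a = b ∨ l = m)

/-- An isomorphism of incidence structures. -/
structure IncIso {P₁ L₁ P₂ L₂ : Type*} (inc₁ : P₁ → L₁ → Prop) (inc₂ : P₂ → L₂ → Prop) where
  pt : P₁ ≃ P₂
  ln : L₁ ≃ L₂
  pres : ∀ a l, inc₁ a l ↔ inc₂ (pt a) (ln l)

/-- A correlation of one incidence structure onto another: a pair of bijections,
points to lines and lines to points, reversing incidence. -/
structure Correlation {P₀ L₀ P₁ L₁ : Type*} (inc₀ : P₀ → L₀ → Prop) (inc₁ : P₁ → L₁ → Prop) where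
  toLines : P₀ ≃ L₁
  toPoints : L₀ ≃ P₁
  rev : ∀ a l, inc₀ a l ↔ inc₁ (toPoints l) (toLines a)

/-- A closed substructure. -/
def IsClosedSub {P L : Type*} (inc : P → L → Prop) (B' : Set P) (B'' : Set L) : Prop :=
  (∀ a₁ a₂ l, a₁ ∈ B' → a₂ ∈ B' → a₁ ≠ a₂ → inc a₁ l → inc a₂ l → l ∈ B'') ∧
  (∀ l₁ l₂ a, l₁ ∈ B'' → l₂ ∈ B'' → l₁ ≠ l₂ → inc a l₁ → inc a l₂ → a ∈ B')

/-- One incidence step (within a substructure) between elements (points or lines). -/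
def IncStep {P L : Type*} (inc : P → L → Prop) (B' : Set P) (B'' : Set L) :
    (P ⊕ L) → (P ⊕ L) → Prop :=
  fun x y => ∃ a l, a ∈ B' ∧ l ∈ B'' ∧ inc a l ∧
    ((x = Sum.inl a ∧ y = Sum.inr l) ∨ (x = Sum.inr l ∧ y = Sum.inl a))

/-- Connectivity of a substructure: any two of its elements are joined by a finite
chain of incidences within it. -/
def SubConnected {P L : Type*} (inc : P → L → Prop) (B' : Set P) (B'' : Set L) : Prop :=
  ∀ x y : P ⊕ L, Sum.elim (· ∈ B') (· ∈ B'') x → Sum.elim (· ∈ B') (· ∈ B'') y →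
    Relation.ReflTransGen (IncStep inc B' B'') x y

/-- Connectivity of the whole incidence structure. -/
def ConnectedPLS {P L : Type*} (inc : P → L → Prop) : Prop :=
  SubConnected inc Set.univ Set.univ

/-- Collinearity of two points. -/
def Collin {P L : Type*} (inc : P → L → Prop) (a b : P) : Prop := ∃ l, inc a l ∧ inc b l

/-- A triangle: three pairwise collinear points which are not on a common line. -/
def IsTriangle {P L : Type*} (inc : P → L → Prop) (a b c : P) : Prop :=
  a ≠ b ∧ b ≠ c ∧ a ≠ c ∧ Collin inc a b ∧ Collin inc b c ∧ Collin inc a c ∧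
    ¬ ∃ l, inc a l ∧ inc b l ∧ inc c l

/-- The Shult axiom (Γ-space). -/
def Shultenian {P L : Type*} (inc : P → L → Prop) : Prop :=
  ∀ a b c d l, IsTriangle inc a b c → inc a l → inc b l → inc d l → Collin inc d c

/-- Degree of a point: the number of lines through it. -/
noncomputable def ptDeg {P L : Type*} (inc : P → L → Prop) (p : P) : ℕ :=
  Set.ncard {l | inc p l}

/-- Size of a line: the number of points on it. -/
noncomputable def lnSize {P L : Type*} (inc : P → L → Prop) (l : L) : ℕ :=
  Set.ncard {p | inc p l}

/-- `G` is a cyclic group (with distinguished generator `1`) which is either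
infinite or of even order greater than `2`. -/
def GoodGroup (G : Type*) [CommRing G] : Prop :=
  Nonempty (G ≃+* ℤ) ∨ ∃ k : ℕ, 2 < k ∧ Even k ∧ Nonempty (G ≃+* ZMod k)

/-- `I` is (as a cyclic group with generator `1`) either `ℤ` or `C_k`. -/
def CyclicIndex (I : Type*) [CommRing I] : Prop :=
  Nonempty (I ≃+* ℤ) ∨ ∃ k : ℕ, 0 < k ∧ Nonempty (I ≃+* ZMod k)

/-- Incidence on the disjoint union `S ⊕ L`, in either direction. -/
def dualInc {S L : Type*} (inc0 : S → L → Prop) : (S ⊕ L) → (S ⊕ L) → Prop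
  | Sum.inl a, Sum.inr b => inc0 a b
  | Sum.inr b, Sum.inl a => inc0 a b
  | _, _ => False

/-- Points of the multiplied structure `⊛_G(∘, M₀)`. -/
def starPt (G : Type*) [CommRing G] (S L : Type*) : Set (G × (S ⊕ L)) :=
  {p | (Even p.1 ∧ ∃ a : S, p.2 = Sum.inl a) ∨ (¬ Even p.1 ∧ ∃ l : L, p.2 = Sum.inr l)}

/-- Lines of the multiplied structure `⊛_G(∘, M₀)`. -/
def starLn (G : Type*) [CommRing G] (S L : Type*) : Set (G × (S ⊕ L)) :=
  {q | (Even q.1 ∧ ∃ l : L, q.2 = Sum.inr l) ∨ (¬ Even q.1 ∧ ∃ a : S, q.2 = Sum.inl a)}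

/-- Incidence of the multiplied structure `⊛_G(∘, M₀)`:
`(i,a) I [j,b]` iff (`i = j` and `a I₀ b` or `b I₀ a`) or (`i = j + 1` and `a = b`). -/
def starInc (G : Type*) [CommRing G] {S L : Type*} (inc0 : S → L → Prop) :
    ↥(starPt G S L) → ↥(starLn G S L) → Prop :=
  fun p l => (p.val.1 = l.val.1 ∧ dualInc inc0 p.val.2 l.val.2) ∨
    (p.val.1 = l.val.1 + 1 ∧ p.val.2 = l.val.2)

/-- The relation `⊹` on `⊛_G(∘, M₀)`: `p ⊹ l` iff `p I l` and `i = j + 1`. -/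
def starDod (G : Type*) [CommRing G] {S L : Type*} (inc0 : S → L → Prop)
    (p : ↥(starPt G S L)) (l : ↥(starLn G S L)) : Prop :=
  starInc G inc0 p l ∧ p.val.1 = l.val.1 + 1

/-- The relation `⊹₁`. -/
def dod1 {P L : Type*} (inc : P → L → Prop) (p : P) (l : L) : Prop :=
  inc p l ∧ ∃ q, q ≠ p ∧ inc q l ∧ ∀ k m n, l ≠ k → l ≠ m → l ≠ n → m ≠ n →
    inc q k → inc p m → inc p n → (∃ x, inc x k ∧ inc x m) → ¬ ∃ x, inc x k ∧ inc x n

/-- The relation `◁`: `a ◁ l` iff `a` is not on `l` and there is exactly one line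
through `a` missing `l`. -/
def corrRel {P L : Type*} (inc : P → L → Prop) (a : P) (l : L) : Prop :=
  ¬ inc a l ∧ ∃! m, inc a m ∧ ¬ ∃ x, inc x l ∧ inc x m

/-- The relation `⊹₂`. -/
def dod2 {P L : Type*} (inc : P → L → Prop) (p : P) (l : L) : Prop :=
  inc p l ∧ ∃ a, ¬ Collin inc p a ∧ corrRel inc a l

/-- The family `{B_i}` is a covering of the structure by connected closed
substructures satisfying conditions (1)-(7). -/
def GoodCover {P L I : Type*} (inc : P → L → Prop) (B' : I → Set P) (B'' : I → Set L) : Prop :=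
  (∀ p, ∃ i, p ∈ B' i) ∧ (∀ l, ∃ i, l ∈ B'' i) ∧
  (∀ i, IsClosedSub inc (B' i) (B'' i)) ∧
  (∀ i, SubConnected inc (B' i) (B'' i)) ∧
  (∀ i₁ i₂, (B' i₁ ∩ B' i₂).Nonempty → B' i₁ = B' i₂) ∧
  (∀ i₁ i₂, (B'' i₁ ∩ B'' i₂).Nonempty → B'' i₁ = B'' i₂) ∧
  (∀ i, ∀ d ∈ B' i, ∃ m, inc d m ∧ m ∉ B'' i) ∧
  (∀ i, ∀ m ∈ B'' i, ∃ d, inc d m ∧ d ∉ B' i) ∧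
  (∀ i, IsClosedSub inc (B' i)ᶜ (B'' i)ᶜ) ∧
  (∀ (i : I) (p : P) (m₁ m₂ m₃ : L) (d₁ d₂ d₃ : P),
    inc p m₁ → inc p m₂ → inc p m₃ → inc d₁ m₁ → inc d₂ m₂ → inc d₃ m₃ →
    m₁ ∈ B'' i → m₂ ∈ B'' i → m₃ ∈ B'' i → d₁ ∉ B' i → d₂ ∉ B' i → d₃ ∉ B' i →
    ∃ n, inc d₁ n ∧ inc d₂ n ∧ inc d₃ n) ∧
  (∀ (i : I) (n : L) (d₁ d₂ d₃ : P) (m₁ m₂ m₃ : L),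
    inc d₁ n → inc d₂ n → inc d₃ n → inc d₁ m₁ → inc d₂ m₂ → inc d₃ m₃ →
    d₁ ∈ B' i → d₂ ∈ B' i → d₃ ∈ B' i → m₁ ∉ B'' i → m₂ ∉ B'' i → m₃ ∉ B'' i →
    ∃ q, inc q m₁ ∧ inc q m₂ ∧ inc q m₃)

/-- The relation `ρ` on the index set: `j ρ i` iff `j ≠ i` and some line of `B''_j`
is incident with some point of `B'_i`. -/
def rhoRel {P L I : Type*} (inc : P → L → Prop) (B' : I → Set P) (B'' : I → Set L)
    (j i : I) : Prop :=
  j ≠ i ∧ ∃ l ∈ B'' j, ∃ a ∈ B' i, inc a l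

/-- The relation `⊹` determined by a covering: `a ⊹ m` iff `a I m` and no member of
the covering contains both `a` and `m`. -/
def dodRel {P L I : Type*} (inc : P → L → Prop) (B' : I → Set P) (B'' : I → Set L)
    (a : P) (m : L) : Prop :=
  inc a m ∧ ¬ ∃ i, a ∈ B' i ∧ m ∈ B'' i

/-- Incidence of the structure `⊛_{i∈I}(M_i, φ_i)` obtained by glueing the family
`(M_i)` along the correlations `φ_i`. -/
def glueInc {I : Type*} [CommRing I] {P Lf : I → Type*} (inc : ∀ i, P i → Lf i → Prop)
    (φ : ∀ i, Correlation (inc i) (inc (i + 1))) :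
    (Σ i, P i) → (Σ i, Lf i) → Prop :=
  fun p l => (∃ (i : I) (a : P i) (m : Lf i), p = ⟨i, a⟩ ∧ l = ⟨i, m⟩ ∧ inc i a m) ∨
    (∃ (j : I) (m : Lf j), p = ⟨j + 1, (φ j).toPoints m⟩ ∧ l = ⟨j, m⟩)

/-- The composite `φ_{n-1} ∘ ⋯ ∘ φ_1 ∘ φ_0` acting on the elements of `M₀`. -/
def corrChain {I : Type*} [CommRing I] {P Lf : I → Type*} (inc : ∀ i, P i → Lf i → Prop)
    (φ : ∀ i, Correlation (inc i) (inc (i + 1))) :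
    (n : ℕ) → (P 0 ⊕ Lf 0) → (P (n : I) ⊕ Lf (n : I))
  | 0 => cast (by rw [Nat.cast_zero])
  | n + 1 => fun x =>
      cast (by rw [Nat.cast_add_one])
        (Sum.elim (fun a => Sum.inr ((φ (n : I)).toLines a))
          (fun m => Sum.inl ((φ (n : I)).toPoints m)) (corrChain inc φ n x))

/-- The correlative multiplying `⊛_k(κ₀, M₀)`. -/
def corInc {S L : Type*} (k : ℕ) (inc0 : S → L → Prop) (kap : L → S) :
    ZMod k × S → ZMod k × L → Prop :=
  fun p l => (p.1 = l.1 ∧ inc0 p.2 l.2) ∨ (p.1 = l.1 + 1 ∧ p.2 = kap l.2)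


lemma even_map_iff' {G H : Type*} [CommRing G] [CommRing H] (e : G ≃+* H) (i : G) :
    Even (e i) ↔ Even i := by
  constructor
  · rintro ⟨r, hr⟩
    refine ⟨e.symm r, ?_⟩
    apply e.injective
    simp [hr]
  · rintro ⟨r, rfl⟩
    exact ⟨e r, by simp⟩

lemma even_zmod_iff' {k : ℕ} (hk : 2 < k) (hek : Even k) (x : ZMod k) :
    Even x ↔ ZMod.castHom (even_iff_two_dvd.mp hek) (ZMod 2) x = 0 := by
  have : NeZero k := ⟨by omega⟩
  set f := ZMod.castHom (even_iff_two_dvd.mp hek) (ZMod 2)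
  constructor
  · rintro ⟨r, rfl⟩
    have : f (r + r) = f r + f r := map_add _ _ _
    rw [this]
    exact CharTwo.add_self_eq_zero _
  · intro h
    have hx : ((x.val : ℕ) : ZMod 2) = 0 := by
      have := ZMod.castHom_apply (h := even_iff_two_dvd.mp hek) x (R := ZMod 2)
      rw [this] at h
      rw [← h]
      simp [ZMod.natCast_val, ZMod.cast_id]
    have hdvd : 2 ∣ x.val := (ZMod.natCast_eq_zero_iff _ _).mp hx
    obtain ⟨m, hm⟩ := hdvd
    refine ⟨(m : ZMod k), ?_⟩
    have hxv : ((x.val : ℕ) : ZMod k) = x := by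
      simp [ZMod.natCast_val, ZMod.cast_id]
    rw [← hxv, hm]
    push_cast
    ring

lemma zmod2_aux' : ∀ y : ZMod 2, 1 - y = 0 ↔ ¬ y = 0 := by decide

lemma parity_lemma' {G : Type} [CommRing G] (hG : GoodGroup G) (i : G) :
    Even (1 - i) ↔ ¬ Even i := by
  rcases hG with ⟨⟨e⟩⟩ | ⟨k, hk, hek, ⟨e⟩⟩
  · rw [← even_map_iff' e i, ← even_map_iff' e (1 - i)]
    rw [map_sub, map_one, Int.even_sub]
    have : ¬ Even (1 : ℤ) := Int.not_even_one
    tauto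
  · rw [← even_map_iff' e i, ← even_map_iff' e (1 - i), map_sub, map_one]
    rw [even_zmod_iff' hk hek, even_zmod_iff' hk hek, map_sub, map_one]
    exact zmod2_aux' _

lemma dualInc_symm' {S L : Type*} (inc0 : S → L → Prop) (x y : S ⊕ L) :
    dualInc inc0 x y ↔ dualInc inc0 y x := by
  cases x <;> cases y <;> simp [dualInc]

/-- the map `κ((i,x)) = (1-i, x)` is an involutive correlation of
`⊛_G(∘, M₀)`; consequently `⊛_G(∘, M₀)` is self-dual. -/
theorem star_involutive_correlation {G : Type} [CommRing G] (hG : GoodGroup G)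
    {S L : Type} (inc0 : S → L → Prop) (hPLS : IsPLS inc0) :
    ∃ κ : Correlation (starInc G inc0) (starInc G inc0),
      (∀ p : ↥(starPt G S L), (κ.toLines p).val = (1 - p.val.1, p.val.2)) ∧
      (∀ l : ↥(starLn G S L), (κ.toPoints l).val = (1 - l.val.1, l.val.2)) ∧
      (∀ p : ↥(starPt G S L), κ.toPoints (κ.toLines p) = p) ∧
      (∀ l : ↥(starLn G S L), κ.toLines (κ.toPoints l) = l) := by
  have par : ∀ i : G, Even (1 - i) ↔ ¬ Even i := parity_lemma' hG
  have hpl : ∀ p : ↥(starPt G S L), (1 - p.val.1, p.val.2) ∈ starLn G S L := by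
    rintro ⟨⟨i, x⟩, hp | hp⟩
    · exact Or.inr ⟨by rw [par]; simpa using hp.1, hp.2⟩
    · exact Or.inl ⟨by rw [par]; simpa using hp.1, hp.2⟩
  have hlp : ∀ l : ↥(starLn G S L), (1 - l.val.1, l.val.2) ∈ starPt G S L := by
    rintro ⟨⟨i, x⟩, hl | hl⟩
    · exact Or.inr ⟨by rw [par]; simpa using hl.1, hl.2⟩
    · exact Or.inl ⟨by rw [par]; simpa using hl.1, hl.2⟩
  let toL : ↥(starPt G S L) ≃ ↥(starLn G S L) :=
    { toFun := fun p => ⟨(1 - p.val.1, p.val.2), hpl p⟩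
      invFun := fun l => ⟨(1 - l.val.1, l.val.2), hlp l⟩
      left_inv := fun p => by
        apply Subtype.ext
        simp [sub_sub_cancel]
      right_inv := fun l => by
        apply Subtype.ext
        simp [sub_sub_cancel] }
  let toP : ↥(starLn G S L) ≃ ↥(starPt G S L) :=
    { toFun := fun l => ⟨(1 - l.val.1, l.val.2), hlp l⟩
      invFun := fun p => ⟨(1 - p.val.1, p.val.2), hpl p⟩
      left_inv := fun l => by
        apply Subtype.ext
        simp [sub_sub_cancel]
      right_inv := fun p => by
        apply Subtype.ext
        simp [sub_sub_cancel] }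
  refine ⟨⟨toL, toP, ?_⟩, fun p => rfl, fun l => rfl, ?_, ?_⟩
  · intro a l
    show starInc G inc0 a l ↔
      ((1 - l.val.1 = 1 - a.val.1 ∧ dualInc inc0 l.val.2 a.val.2) ∨
        (1 - l.val.1 = 1 - a.val.1 + 1 ∧ l.val.2 = a.val.2))
    unfold starInc
    constructor
    · rintro (⟨h1, h2⟩ | ⟨h1, h2⟩)
      · exact Or.inl ⟨by linear_combination h1, (dualInc_symm' inc0 _ _).mp h2⟩
      · exact Or.inr ⟨by linear_combination h1, h2.symm⟩
    · rintro (⟨h1, h2⟩ | ⟨h1, h2⟩)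
      · exact Or.inl ⟨by linear_combination h1, (dualInc_symm' inc0 _ _).mp h2⟩
      · exact Or.inr ⟨by linear_combination h1, h2.symm⟩
  · intro p
    apply Subtype.ext
    simp [toL, toP, sub_sub_cancel]
  · intro l
    apply Subtype.ext
    simp [toL, toP, sub_sub_cancel]
end

section
/- Let M₀ be a partial linear space, M₀° its dual, and G a cyclic group that is either infinite or of even order greater than 2. Then ⊛_G(∘, M₀) is isomorphic to ⊛_G(∘, M₀°); an isomorphism is given by the map δ with δ((i,a)) = (i+1, a) on both points and lines. -/
lemma zmod_even_iff {k : ℕ} (hke : Even k) (hk : 2 < k) (x : ZMod k) :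
    Even x ↔ x.val % 2 = 0 := by
  haveI : NeZero k := ⟨by omega⟩
  obtain ⟨c, hc⟩ := hke
  constructor
  · rintro ⟨r, rfl⟩
    rw [ZMod.val_add, Nat.mod_mod_of_dvd _ ⟨c, by omega⟩]
    omega
  · intro h
    have hx : ((x.val : ℕ) : ZMod k) = x := ZMod.natCast_rightInverse x
    refine ⟨((x.val / 2 : ℕ) : ZMod k), ?_⟩
    conv_lhs => rw [← hx]
    rw [← Nat.cast_add]
    congr 1
    omega

lemma zmod_flip {k : ℕ} (hke : Even k) (hk : 2 < k) (x : ZMod k) :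
    Even (x + 1) ↔ ¬ Even x := by
  haveI : NeZero k := ⟨by omega⟩
  haveI : Fact (1 < k) := ⟨by omega⟩
  rw [zmod_even_iff hke hk, zmod_even_iff hke hk, ZMod.val_add, ZMod.val_one,
    Nat.mod_mod_of_dvd _ (even_iff_two_dvd.mp hke)]
  omega

lemma good_flip {G : Type} [CommRing G] (hG : GoodGroup G) (i : G) :
    Even (i + 1) ↔ ¬ Even i := by
  have transfer : ∀ {H : Type} [CommRing H] (e : G ≃+* H) (j : G),
      Even j ↔ Even (e j) := by
    intro H _ e j
    constructor
    · rintro ⟨r, rfl⟩; exact ⟨e r, by rw [map_add]⟩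
    · rintro ⟨r, hr⟩
      exact ⟨e.symm r, by apply e.injective; rw [map_add, e.apply_symm_apply, hr]⟩
  obtain ⟨⟨e⟩⟩ | ⟨k, hk2, hke, ⟨e⟩⟩ := hG
  · rw [transfer e, transfer e, map_add, map_one, Int.even_add_one]
  · rw [transfer e, transfer e, map_add, map_one, zmod_flip hke hk2]

lemma dualInc_swap {S L : Type} (inc0 : S → L → Prop) (x y : S ⊕ L) :
    dualInc (fun (l : L) (a : S) => inc0 a l) x.swap y.swap ↔ dualInc inc0 x y := by
  cases x <;> cases y <;> simp [dualInc, Sum.swap]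


/-- `⊛_G(∘, M₀) ≅ ⊛_G(∘, M₀°)`, via `δ((i,a)) = (i+1, a)`. -/
theorem star_iso_star_dual {G : Type} [CommRing G] (hG : GoodGroup G)
    {S L : Type} (inc0 : S → L → Prop) (hPLS : IsPLS inc0) :
    ∃ δ : IncIso (starInc G inc0) (starInc G (fun (l : L) (a : S) => inc0 a l)),
      (∀ p : ↥(starPt G S L), (δ.pt p).val = (p.val.1 + 1, p.val.2.swap)) ∧
      (∀ l : ↥(starLn G S L), (δ.ln l).val = (l.val.1 + 1, l.val.2.swap)) := by
  have hflip := good_flip hG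
  refine ⟨⟨⟨fun p => ⟨(p.val.1 + 1, p.val.2.swap), ?_⟩,
            fun q => ⟨(q.val.1 - 1, q.val.2.swap), ?_⟩, ?_, ?_⟩,
           ⟨fun p => ⟨(p.val.1 + 1, p.val.2.swap), ?_⟩,
            fun q => ⟨(q.val.1 - 1, q.val.2.swap), ?_⟩, ?_, ?_⟩, ?_⟩, fun p => rfl, fun l => rfl⟩
  · obtain ⟨he, a, ha⟩ | ⟨ho, m, hm⟩ := p.2
    · exact Or.inr ⟨by rw [hflip]; simpa using he, a, by rw [ha]; rfl⟩
    · exact Or.inl ⟨by rw [hflip]; exact ho, m, by rw [hm]; rfl⟩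
  · have hq : Even q.val.1 ↔ ¬ Even (q.val.1 - 1) := by
      rw [← hflip (q.val.1 - 1), sub_add_cancel]
    obtain ⟨he, a, ha⟩ | ⟨ho, m, hm⟩ := q.2
    · exact Or.inr ⟨hq.mp he, a, by rw [ha]; rfl⟩
    · exact Or.inl ⟨not_not.mp (fun h => ho (hq.mpr h)), m, by rw [hm]; rfl⟩
  · intro p; apply Subtype.ext; simp
  · intro q; apply Subtype.ext; simp
  · obtain ⟨he, a, ha⟩ | ⟨ho, m, hm⟩ := p.2
    · exact Or.inr ⟨by rw [hflip]; simpa using he, a, by rw [ha]; rfl⟩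
    · exact Or.inl ⟨by rw [hflip]; exact ho, m, by rw [hm]; rfl⟩
  · have hq : Even q.val.1 ↔ ¬ Even (q.val.1 - 1) := by
      rw [← hflip (q.val.1 - 1), sub_add_cancel]
    obtain ⟨he, a, ha⟩ | ⟨ho, m, hm⟩ := q.2
    · exact Or.inr ⟨hq.mp he, a, by rw [ha]; rfl⟩
    · exact Or.inl ⟨not_not.mp (fun h => ho (hq.mpr h)), m, by rw [hm]; rfl⟩
  · intro p; apply Subtype.ext; simp
  · intro q; apply Subtype.ext; simp
  · intro p l
    simp only [starInc, Equiv.coe_fn_mk, add_left_inj, dualInc_swap,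
      Function.Injective.eq_iff Sum.swap_leftInverse.injective]
end

section
/- Let M₀ be a partial linear space, G a cyclic group that is either infinite or of even order greater than 2, and i ∈ G. Then the image im(ε_i) of M₀ under the embedding ε_i is a closed substructure of ⊛_G(∘, M₀), and it is isomorphic to M₀ if i is even and to the dual M₀° if i is odd. -/
/-- the image of `M₀` under the embedding `ε_i` is a closed
substructure of `⊛_G(∘, M₀)`, isomorphic to `M₀` for even `i` and to `M₀°` for odd
`i`. -/
theorem star_image_closed_substructure {G : Type} [CommRing G] (hG : GoodGroup G)
    {S L : Type} (inc0 : S → L → Prop) (hPLS : IsPLS inc0) (i : G) :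
    IsClosedSub (starInc G inc0) {p : ↥(starPt G S L) | p.val.1 = i}
      {l : ↥(starLn G S L) | l.val.1 = i} ∧
    (Even i → Nonempty (IncIso inc0
      (fun (a : {p : ↥(starPt G S L) // p.val.1 = i})
           (l : {q : ↥(starLn G S L) // q.val.1 = i}) => starInc G inc0 a.val l.val))) ∧
    (¬ Even i → Nonempty (IncIso (fun (l : L) (a : S) => inc0 a l)
      (fun (a : {p : ↥(starPt G S L) // p.val.1 = i})
           (l : {q : ↥(starLn G S L) // q.val.1 = i}) => starInc G inc0 a.val l.val))) := by
  refine ⟨⟨?_, ?_⟩, ?_, ?_⟩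
  · intro a₁ a₂ l h1 h2 hne hinc1 hinc2
    rcases hinc1 with ⟨heq, _⟩ | ⟨h1a, h1b⟩
    · exact (heq ▸ h1 : l.val.1 = i)
    · rcases hinc2 with ⟨heq, _⟩ | ⟨h2a, h2b⟩
      · exact (heq ▸ h2 : l.val.1 = i)
      · exact absurd (Subtype.ext (Prod.ext (h1.trans h2.symm) (h1b.trans h2b.symm))) hne
  · intro l₁ l₂ a h1 h2 hne hinc1 hinc2
    rcases hinc1 with ⟨heq, _⟩ | ⟨h1a, h1b⟩
    · exact (heq.trans h1 : a.val.1 = i)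
    · rcases hinc2 with ⟨heq, _⟩ | ⟨h2a, h2b⟩
      · exact (heq.trans h2 : a.val.1 = i)
      · exact absurd (Subtype.ext (Prod.ext (h1.trans h2.symm) (h1b.symm.trans h2b))) hne
  · intro he
    have hp : ∀ p : {p : ↥(starPt G S L) // p.val.1 = i}, ∃ a : S, p.val.val.2 = Sum.inl a := by
      intro p
      rcases p.val.prop with ⟨_, ha⟩ | ⟨hodd, _⟩
      · exact ha
      · rw [p.prop] at hodd; exact absurd he hodd
    have hl : ∀ q : {q : ↥(starLn G S L) // q.val.1 = i}, ∃ m : L, q.val.val.2 = Sum.inr m := by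
      intro q
      rcases q.val.prop with ⟨_, hm⟩ | ⟨hodd, _⟩
      · exact hm
      · rw [q.prop] at hodd; exact absurd he hodd
    refine ⟨⟨⟨fun a => ⟨⟨(i, Sum.inl a), Or.inl ⟨he, a, rfl⟩⟩, rfl⟩,
        fun p => (hp p).choose, ?_, ?_⟩,
      ⟨fun m => ⟨⟨(i, Sum.inr m), Or.inl ⟨he, m, rfl⟩⟩, rfl⟩,
        fun q => (hl q).choose, ?_, ?_⟩, ?_⟩⟩
    · intro a
      exact (Sum.inl.inj (hp ⟨⟨(i, Sum.inl a), Or.inl ⟨he, a, rfl⟩⟩, rfl⟩).choose_spec).symm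
    · intro p
      exact (Subtype.ext (Subtype.ext (Prod.ext p.prop.symm (hp p).choose_spec.symm)))
    · intro m
      exact (Sum.inr.inj (hl ⟨⟨(i, Sum.inr m), Or.inl ⟨he, m, rfl⟩⟩, rfl⟩).choose_spec).symm
    · intro q
      exact (Subtype.ext (Subtype.ext (Prod.ext q.prop.symm (hl q).choose_spec.symm)))
    · intro a m
      constructor
      · intro h
        exact Or.inl ⟨rfl, h⟩
      · rintro (⟨_, h⟩ | ⟨_, h⟩)
        · exact h
        · exact absurd h (by simp)
  · intro ho
    have hp : ∀ p : {p : ↥(starPt G S L) // p.val.1 = i}, ∃ m : L, p.val.val.2 = Sum.inr m := by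
      intro p
      rcases p.val.prop with ⟨heven, _⟩ | ⟨_, hm⟩
      · rw [p.prop] at heven; exact absurd heven ho
      · exact hm
    have hl : ∀ q : {q : ↥(starLn G S L) // q.val.1 = i}, ∃ a : S, q.val.val.2 = Sum.inl a := by
      intro q
      rcases q.val.prop with ⟨heven, _⟩ | ⟨_, ha⟩
      · rw [q.prop] at heven; exact absurd heven ho
      · exact ha
    refine ⟨⟨⟨fun m => ⟨⟨(i, Sum.inr m), Or.inr ⟨ho, m, rfl⟩⟩, rfl⟩,
        fun p => (hp p).choose, ?_, ?_⟩,
      ⟨fun a => ⟨⟨(i, Sum.inl a), Or.inr ⟨ho, a, rfl⟩⟩, rfl⟩,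
        fun q => (hl q).choose, ?_, ?_⟩, ?_⟩⟩
    · intro m
      exact (Sum.inr.inj (hp ⟨⟨(i, Sum.inr m), Or.inr ⟨ho, m, rfl⟩⟩, rfl⟩).choose_spec).symm
    · intro p
      exact (Subtype.ext (Subtype.ext (Prod.ext p.prop.symm (hp p).choose_spec.symm)))
    · intro a
      exact (Sum.inl.inj (hl ⟨⟨(i, Sum.inl a), Or.inr ⟨ho, a, rfl⟩⟩, rfl⟩).choose_spec).symm
    · intro q
      exact (Subtype.ext (Subtype.ext (Prod.ext q.prop.symm (hl q).choose_spec.symm)))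
    · intro m a
      constructor
      · intro h
        exact Or.inl ⟨rfl, h⟩
      · rintro (⟨_, h⟩ | ⟨_, h⟩)
        · exact h
        · exact absurd h (by simp)
end

section
/- Let M₀ be a finite partial linear space in which every point has the same degree κ and every line the same size ρ, with ρ ≠ κ, and let G be a cyclic group that is either infinite or of even order greater than 2. Then for each point p and each line l of ⊛_G(∘, M₀): p ⊹ l if and only if p is incident with l and rank(p) = rank(l). -/
section StarAux

lemma goodGroup_facts {G : Type} [CommRing G] (hG : GoodGroup G) :
    (1:G) ≠ 0 ∧ ¬ Even (1:G) ∧ ∀ x : G, Even x ∨ Even (x + 1) := by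
  rcases hG with he | ⟨k, hk2, hke, he⟩ <;> obtain ⟨e⟩ := he
  · refine ⟨?_, ?_, ?_⟩
    · intro h
      have h2 := congrArg e h
      rw [map_one, map_zero] at h2
      exact one_ne_zero h2
    · rintro ⟨r, hr⟩
      have h2 : (1:ℤ) = e r + e r := by rw [← map_add, ← hr, map_one]
      omega
    · intro x
      rcases Int.even_or_odd (e x) with ⟨r, hr⟩ | ⟨r, hr⟩
      · left
        refine ⟨e.symm r, ?_⟩
        apply e.injective
        rw [map_add, RingEquiv.apply_symm_apply, hr]
      · right
        refine ⟨e.symm (r + 1), ?_⟩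
        apply e.injective
        rw [map_add, map_add, map_one, RingEquiv.apply_symm_apply, hr]
        ring
  · haveI : NeZero k := ⟨by omega⟩
    haveI : Fact (1 < k) := ⟨by omega⟩
    have h2 : ¬ Even (1 : ZMod 2) := by
      rintro ⟨r, hr⟩
      rw [← two_mul, show (2:ZMod 2) = 0 by decide, zero_mul] at hr
      exact one_ne_zero hr
    obtain ⟨c, hc⟩ := hke
    have hdvd : (2:ℕ) ∣ k := ⟨c, by omega⟩
    refine ⟨?_, ?_, ?_⟩
    · intro h
      have h3 := congrArg e h
      rw [map_one, map_zero] at h3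
      exact one_ne_zero h3
    · rintro ⟨r, hr⟩
      apply h2
      refine ⟨ZMod.castHom hdvd (ZMod 2) (e r), ?_⟩
      have h3 := congrArg (ZMod.castHom hdvd (ZMod 2)) (congrArg e hr)
      rwa [map_one, map_add, map_add, map_one] at h3
    · intro x
      obtain ⟨n, hn⟩ := ZMod.intCast_surjective (e x)
      rcases Int.even_or_odd n with ⟨r, hr⟩ | ⟨r, hr⟩
      · left
        refine ⟨e.symm ((r : ZMod k)), ?_⟩
        apply e.injective
        rw [map_add, RingEquiv.apply_symm_apply, ← hn, hr]
        push_cast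
        ring
      · right
        refine ⟨e.symm ((r : ZMod k) + 1), ?_⟩
        apply e.injective
        rw [map_add, map_add, map_one, RingEquiv.apply_symm_apply, ← hn, hr]
        push_cast
        ring

variable {G : Type} [CommRing G] {S L : Type} [Finite S] [Finite L]

lemma star_deg_inl (inc0 : S → L → Prop) (hodd : ¬ Even (1 : G))
    (p : ↥(starPt G S L)) (s : S) (hs : p.val.2 = Sum.inl s) :
    ptDeg (starInc G inc0) p = ptDeg inc0 s + 1 := by
  obtain ⟨⟨i, x⟩, hp⟩ := p
  dsimp at hs
  subst hs
  have hev : Even i := by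
    rcases hp with ⟨h, -⟩ | ⟨-, l0, h⟩
    · exact h
    · simp at h
  have hbmem : ((i - 1, Sum.inl s) : G × (S ⊕ L)) ∈ starLn G S L := by
    refine Or.inr ⟨?_, s, rfl⟩
    intro h
    apply hodd
    obtain ⟨r, hr⟩ := hev
    obtain ⟨t, ht⟩ := h
    dsimp at ht
    exact ⟨r - t, by linear_combination hr - ht⟩
  have hfmem : ∀ m : L, ((i, Sum.inr m) : G × (S ⊕ L)) ∈ starLn G S L :=
    fun m => Or.inl ⟨hev, m, rfl⟩
  set f : L → ↥(starLn G S L) := fun m => ⟨(i, Sum.inr m), hfmem m⟩ with hf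
  set b : ↥(starLn G S L) := ⟨(i - 1, Sum.inl s), hbmem⟩ with hb
  have hset : {l : ↥(starLn G S L) | starInc G inc0 ⟨(i, Sum.inl s), hp⟩ l}
      = insert b (f '' {m | inc0 s m}) := by
    ext l
    constructor
    · intro h
      obtain ⟨⟨j, y⟩, hl⟩ := l
      rcases h with ⟨hj, hd⟩ | ⟨hj, he⟩
      · cases y with
        | inl a => exact absurd hd (by simp [dualInc])
        | inr m =>
          exact Or.inr ⟨m, hd, Subtype.ext (by dsimp [f] at hj ⊢; rw [hj])⟩
      · refine Or.inl (Subtype.ext ?_)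
        dsimp at hj he ⊢
        rw [← he]
        have : j = i - 1 := by rw [hj]; ring
        rw [this]
    · rintro (rfl | ⟨m, hm, rfl⟩)
      · exact Or.inr ⟨by dsimp; ring, rfl⟩
      · exact Or.inl ⟨rfl, hm⟩
  have hinj : Function.Injective f := by
    intro a c h
    simpa [hf] using congrArg (fun t => t.val.2) h
  have hnot : b ∉ f '' {m | inc0 s m} := by
    rintro ⟨m, -, h⟩
    simpa [hf, hb] using congrArg (fun t => t.val.2) h
  unfold ptDeg
  rw [hset, Set.ncard_insert_of_notMem hnot (Set.Finite.image _ (Set.toFinite _)),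
    Set.ncard_image_of_injective _ hinj]

lemma star_deg_inr (inc0 : S → L → Prop)
    (hpar : ∀ x : G, Even x ∨ Even (x + 1))
    (p : ↥(starPt G S L)) (l0 : L) (hs : p.val.2 = Sum.inr l0) :
    ptDeg (starInc G inc0) p = lnSize inc0 l0 + 1 := by
  obtain ⟨⟨i, x⟩, hp⟩ := p
  dsimp at hs
  subst hs
  have hod : ¬ Even i := by
    rcases hp with ⟨-, a, h⟩ | ⟨h, -⟩
    · simp at h
    · exact h
  have hev1 : Even (i - 1) := by
    rcases hpar (i - 1) with h | h
    · exact h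
    · rw [show i - 1 + 1 = i by ring] at h
      exact absurd h hod
  have hbmem : ((i - 1, Sum.inr l0) : G × (S ⊕ L)) ∈ starLn G S L :=
    Or.inl ⟨hev1, l0, rfl⟩
  have hfmem : ∀ a : S, ((i, Sum.inl a) : G × (S ⊕ L)) ∈ starLn G S L :=
    fun a => Or.inr ⟨hod, a, rfl⟩
  set f : S → ↥(starLn G S L) := fun a => ⟨(i, Sum.inl a), hfmem a⟩ with hf
  set b : ↥(starLn G S L) := ⟨(i - 1, Sum.inr l0), hbmem⟩ with hb
  have hset : {l : ↥(starLn G S L) | starInc G inc0 ⟨(i, Sum.inr l0), hp⟩ l}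
      = insert b (f '' {a | inc0 a l0}) := by
    ext l
    constructor
    · intro h
      obtain ⟨⟨j, y⟩, hl⟩ := l
      rcases h with ⟨hj, hd⟩ | ⟨hj, he⟩
      · cases y with
        | inl a =>
          exact Or.inr ⟨a, hd, Subtype.ext (by dsimp [f] at hj ⊢; rw [hj])⟩
        | inr m => exact absurd hd (by simp [dualInc])
      · refine Or.inl (Subtype.ext ?_)
        dsimp at hj he ⊢
        rw [← he]
        have : j = i - 1 := by rw [hj]; ring
        rw [this]
    · rintro (rfl | ⟨a, ha, rfl⟩)
      · exact Or.inr ⟨by dsimp; ring, rfl⟩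
      · exact Or.inl ⟨rfl, ha⟩
  have hinj : Function.Injective f := by
    intro a c h
    simpa [hf] using congrArg (fun t => t.val.2) h
  have hnot : b ∉ f '' {a | inc0 a l0} := by
    rintro ⟨a, -, h⟩
    simpa [hf, hb] using congrArg (fun t => t.val.2) h
  unfold ptDeg lnSize
  rw [hset, Set.ncard_insert_of_notMem hnot (Set.Finite.image _ (Set.toFinite _)),
    Set.ncard_image_of_injective _ hinj]

lemma star_size_inr (inc0 : S → L → Prop) (hodd : ¬ Even (1 : G))
    (l : ↥(starLn G S L)) (m0 : L) (hs : l.val.2 = Sum.inr m0) :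
    lnSize (starInc G inc0) l = lnSize inc0 m0 + 1 := by
  obtain ⟨⟨j, y⟩, hl⟩ := l
  dsimp at hs
  subst hs
  have hev : Even j := by
    rcases hl with ⟨h, -⟩ | ⟨-, a, h⟩
    · exact h
    · simp at h
  have hbmem : ((j + 1, Sum.inr m0) : G × (S ⊕ L)) ∈ starPt G S L := by
    refine Or.inr ⟨?_, m0, rfl⟩
    intro h
    apply hodd
    obtain ⟨r, hr⟩ := hev
    obtain ⟨t, ht⟩ := h
    dsimp at ht
    exact ⟨t - r, by linear_combination ht - hr⟩
  have hfmem : ∀ a : S, ((j, Sum.inl a) : G × (S ⊕ L)) ∈ starPt G S L :=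
    fun a => Or.inl ⟨hev, a, rfl⟩
  set f : S → ↥(starPt G S L) := fun a => ⟨(j, Sum.inl a), hfmem a⟩ with hf
  set b : ↥(starPt G S L) := ⟨(j + 1, Sum.inr m0), hbmem⟩ with hb
  have hset : {p : ↥(starPt G S L) | starInc G inc0 p ⟨(j, Sum.inr m0), hl⟩}
      = insert b (f '' {a | inc0 a m0}) := by
    ext p
    constructor
    · intro h
      obtain ⟨⟨i, x⟩, hp⟩ := p
      rcases h with ⟨hj, hd⟩ | ⟨hj, he⟩
      · cases x with
        | inl a =>
          exact Or.inr ⟨a, hd, Subtype.ext (by dsimp at hj ⊢; rw [hj])⟩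
        | inr m => exact absurd hd (by simp [dualInc])
      · refine Or.inl (Subtype.ext ?_)
        dsimp [b] at hj he ⊢
        rw [← he, hj]
    · rintro (rfl | ⟨a, ha, rfl⟩)
      · exact Or.inr ⟨rfl, rfl⟩
      · exact Or.inl ⟨rfl, ha⟩
  have hinj : Function.Injective f := by
    intro a c h
    simpa [hf] using congrArg (fun t => t.val.2) h
  have hnot : b ∉ f '' {a | inc0 a m0} := by
    rintro ⟨a, -, h⟩
    simpa [hf, hb] using congrArg (fun t => t.val.2) h
  unfold lnSize
  rw [hset, Set.ncard_insert_of_notMem hnot (Set.Finite.image _ (Set.toFinite _)),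
    Set.ncard_image_of_injective _ hinj]

lemma star_size_inl (inc0 : S → L → Prop)
    (hpar : ∀ x : G, Even x ∨ Even (x + 1))
    (l : ↥(starLn G S L)) (a0 : S) (hs : l.val.2 = Sum.inl a0) :
    lnSize (starInc G inc0) l = ptDeg inc0 a0 + 1 := by
  obtain ⟨⟨j, y⟩, hl⟩ := l
  dsimp at hs
  subst hs
  have hod : ¬ Even j := by
    rcases hl with ⟨-, m, h⟩ | ⟨h, -⟩
    · simp at h
    · exact h
  have hev1 : Even (j + 1) := by
    rcases hpar j with h | h
    · exact absurd h hod
    · exact h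
  have hbmem : ((j + 1, Sum.inl a0) : G × (S ⊕ L)) ∈ starPt G S L :=
    Or.inl ⟨hev1, a0, rfl⟩
  have hfmem : ∀ m : L, ((j, Sum.inr m) : G × (S ⊕ L)) ∈ starPt G S L :=
    fun m => Or.inr ⟨hod, m, rfl⟩
  set f : L → ↥(starPt G S L) := fun m => ⟨(j, Sum.inr m), hfmem m⟩ with hf
  set b : ↥(starPt G S L) := ⟨(j + 1, Sum.inl a0), hbmem⟩ with hb
  have hset : {p : ↥(starPt G S L) | starInc G inc0 p ⟨(j, Sum.inl a0), hl⟩}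
      = insert b (f '' {m | inc0 a0 m}) := by
    ext p
    constructor
    · intro h
      obtain ⟨⟨i, x⟩, hp⟩ := p
      rcases h with ⟨hj, hd⟩ | ⟨hj, he⟩
      · cases x with
        | inl a => exact absurd hd (by simp [dualInc])
        | inr m =>
          exact Or.inr ⟨m, hd, Subtype.ext (by dsimp at hj ⊢; rw [hj])⟩
      · refine Or.inl (Subtype.ext ?_)
        dsimp [b] at hj he ⊢
        rw [← he, hj]
    · rintro (rfl | ⟨m, hm, rfl⟩)
      · exact Or.inr ⟨rfl, rfl⟩
      · exact Or.inl ⟨rfl, hm⟩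
  have hinj : Function.Injective f := by
    intro a c h
    simpa [hf] using congrArg (fun t => t.val.2) h
  have hnot : b ∉ f '' {m | inc0 a0 m} := by
    rintro ⟨m, -, h⟩
    simpa [hf, hb] using congrArg (fun t => t.val.2) h
  unfold lnSize ptDeg
  rw [hset, Set.ncard_insert_of_notMem hnot (Set.Finite.image _ (Set.toFinite _)),
    Set.ncard_image_of_injective _ hinj]

end StarAux

/-- if `M₀` is a finite PLS with constant point degree `κ` and constant
line size `ρ ≠ κ`, then in `⊛_G(∘, M₀)` one has `p ⊹ l` iff `p I l` and
`rank(p) = rank(l)`. -/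
theorem star_dod_iff_rank_eq {G : Type} [CommRing G] (hG : GoodGroup G)
    {S L : Type} [Finite S] [Finite L] (inc0 : S → L → Prop) (hPLS : IsPLS inc0)
    (κ ρ : ℕ) (hdeg : ∀ a, ptDeg inc0 a = κ) (hsize : ∀ l, lnSize inc0 l = ρ)
    (hne : ρ ≠ κ) :
    ∀ (p : ↥(starPt G S L)) (l : ↥(starLn G S L)),
      starDod G inc0 p l ↔
        (starInc G inc0 p l ∧ ptDeg (starInc G inc0) p = lnSize (starInc G inc0) l) := by
  obtain ⟨h10, hodd, hpar⟩ := goodGroup_facts hG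
  intro p l
  have key : ∀ h : starInc G inc0 p l, p.val.1 = l.val.1 + 1 →
      p.val.2 = l.val.2 := by
    rintro (⟨hj, -⟩ | ⟨-, he⟩) hstep
    · exfalso
      apply h10
      have h2 : l.val.1 = l.val.1 + 1 := hj.symm.trans hstep
      have := left_eq_add.mp h2
      simpa using this
    · exact he
  rcases p.2 with ⟨hpe, s, hps⟩ | ⟨hpo, m0, hps⟩ <;>
    rcases l.2 with ⟨hle, m1, hls⟩ | ⟨hlo, a1, hls⟩
  · -- p = inl s (point side S), l = inr m1 : ranks κ+1 vs ρ+1, dod impossible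
    have rp := star_deg_inl inc0 hodd p s hps
    have rl := star_size_inr inc0 hodd l m1 hls
    constructor
    · rintro ⟨hinc, hstep⟩
      have he := key hinc hstep
      rw [hps, hls] at he
      simp at he
    · rintro ⟨hinc, hrank⟩
      rw [rp, rl, hdeg, hsize] at hrank
      exact absurd (by omega : ρ = κ) hne
  · -- p = inl s, l = inl a1 : same side, ranks both κ+1
    have rp := star_deg_inl inc0 hodd p s hps
    have rl := star_size_inl inc0 hpar l a1 hls
    constructor
    · rintro ⟨hinc, hstep⟩
      exact ⟨hinc, by rw [rp, rl, hdeg, hdeg]⟩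
    · rintro ⟨hinc, -⟩
      refine ⟨hinc, ?_⟩
      rcases hinc with ⟨-, hd⟩ | ⟨hj, -⟩
      · rw [hps, hls] at hd
        exact absurd hd (by simp [dualInc])
      · exact hj
  · -- p = inr m0, l = inr m1 : same side, ranks both ρ+1
    have rp := star_deg_inr inc0 hpar p m0 hps
    have rl := star_size_inr inc0 hodd l m1 hls
    constructor
    · rintro ⟨hinc, hstep⟩
      exact ⟨hinc, by rw [rp, rl, hsize, hsize]⟩
    · rintro ⟨hinc, -⟩
      refine ⟨hinc, ?_⟩
      rcases hinc with ⟨-, hd⟩ | ⟨hj, -⟩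
      · rw [hps, hls] at hd
        exact absurd hd (by simp [dualInc])
      · exact hj
  · -- p = inr m0, l = inl a1 : ranks ρ+1 vs κ+1
    have rp := star_deg_inr inc0 hpar p m0 hps
    have rl := star_size_inl inc0 hpar l a1 hls
    constructor
    · rintro ⟨hinc, hstep⟩
      have he := key hinc hstep
      rw [hps, hls] at he
      simp at he
    · rintro ⟨hinc, hrank⟩
      rw [rp, rl, hdeg, hsize] at hrank
      exact absurd (by omega : ρ = κ) hne
end

section
/- Let G be a cyclic group that is either infinite or of even order greater than 2, and let M₀ be a Shultenian partial linear space with no 2-element lines, in which any two collinear points can be completed to a triangle, and any two intersecting lines can be completed by a third line to a triangle of lines. Then for every point p and every line l of ⊛_G(∘, M₀): p ⊹₁ l if and only if p ⊹ l. -/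
section Aux

variable {S L : Type} {inc0 : S → L → Prop}

lemma dualInc_left_inr {x : S ⊕ L} {y : L} (h : dualInc inc0 x (Sum.inr y)) :
    ∃ a, x = Sum.inl a ∧ inc0 a y := by
  cases x with
  | inl a => exact ⟨a, rfl, h⟩
  | inr b => exact h.elim

lemma dualInc_left_inl {x : S ⊕ L} {s : S} (h : dualInc inc0 x (Sum.inl s)) :
    ∃ z, x = Sum.inr z ∧ inc0 s z := by
  cases x with
  | inl a => exact h.elim
  | inr z => exact ⟨z, rfl, h⟩

lemma dualInc_inr_left {x : S ⊕ L} {y : L} (h : dualInc inc0 (Sum.inr y) x) :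
    ∃ a, x = Sum.inl a ∧ inc0 a y := by
  cases x with
  | inl a => exact ⟨a, rfl, h⟩
  | inr b => exact h.elim

lemma dualInc_inl_left {x : S ⊕ L} {a : S} (h : dualInc inc0 (Sum.inl a) x) :
    ∃ z, x = Sum.inr z ∧ inc0 a z := by
  cases x with
  | inl b => exact h.elim
  | inr z => exact ⟨z, rfl, h⟩

lemma pick_one {α : Type} {Pp : α → Prop} {e₁ e₂ e₃ : α} (u v : α)
    (h12 : e₁ ≠ e₂) (h13 : e₁ ≠ e₃) (h23 : e₂ ≠ e₃)
    (p1 : Pp e₁) (p2 : Pp e₂) (p3 : Pp e₃) :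
    ∃ x, x ≠ u ∧ x ≠ v ∧ Pp x := by
  by_cases h1 : e₁ = u
  · subst h1
    by_cases h2 : e₂ = v
    · subst h2
      exact ⟨e₃, h13.symm, h23.symm, p3⟩
    · exact ⟨e₂, h12.symm, h2, p2⟩
  · by_cases h2 : e₁ = v
    · subst h2
      by_cases h3 : e₂ = u
      · subst h3
        exact ⟨e₃, h23.symm, h13.symm, p3⟩
      · exact ⟨e₂, h3, h12.symm, p2⟩
    · exact ⟨e₁, h1, h2, p1⟩

lemma pick_two {α : Type} {Pp : α → Prop} {e₁ e₂ e₃ : α} (s : α)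
    (h12 : e₁ ≠ e₂) (h13 : e₁ ≠ e₃) (h23 : e₂ ≠ e₃)
    (p1 : Pp e₁) (p2 : Pp e₂) (p3 : Pp e₃) :
    ∃ x y, x ≠ y ∧ x ≠ s ∧ y ≠ s ∧ Pp x ∧ Pp y := by
  by_cases h1 : e₁ = s
  · subst h1
    exact ⟨e₂, e₃, h23, h12.symm, h13.symm, p2, p3⟩
  · by_cases h2 : e₂ = s
    · subst h2
      exact ⟨e₁, e₃, h13, h1, h23.symm, p1, p3⟩
    · exact ⟨e₁, e₂, h12, h1, h2, p1, p2⟩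

lemma triangle_rot {a b c : S} (h : IsTriangle inc0 a b c) : IsTriangle inc0 b c a := by
  obtain ⟨hab, hbc, hac, cab, cbc, cac, hno⟩ := h
  refine ⟨hbc, hac.symm, hab.symm, cbc, ⟨cac.choose, cac.choose_spec.2, cac.choose_spec.1⟩,
    ⟨cab.choose, cab.choose_spec.2, cab.choose_spec.1⟩, ?_⟩
  rintro ⟨t, hbt, hct, hat⟩
  exact hno ⟨t, hat, hbt, hct⟩

/-- Lemma A: for `a ≠ b` on a line `y`, there are lines `z₁ ≠ n'` through `a`
and a line `w` through `b`, all different from `y`, such that `w` meets both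
`z₁` and `n'`. -/
lemma lemA (hPLS : IsPLS inc0) (hShult : Shultenian inc0)
    (hno2 : ∀ l : L, ∃ a b c : S, a ≠ b ∧ a ≠ c ∧ b ≠ c ∧
      inc0 a l ∧ inc0 b l ∧ inc0 c l)
    (htri : ∀ a b : S, a ≠ b → Collin inc0 a b → ∃ c, IsTriangle inc0 a b c)
    {a b : S} {y : L} (hab : a ≠ b) (ha : inc0 a y) (hb : inc0 b y) :
    ∃ (w z₁ n' : L) (c d : S), w ≠ y ∧ z₁ ≠ y ∧ n' ≠ y ∧ z₁ ≠ n' ∧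
      inc0 a z₁ ∧ inc0 a n' ∧ inc0 b w ∧ inc0 c w ∧ inc0 c z₁ ∧ inc0 d w ∧ inc0 d n' := by
  obtain ⟨c, htr⟩ := htri a b hab ⟨y, ha, hb⟩
  obtain ⟨hab', hbc, hac, _, ⟨w, hbw, hcw⟩, ⟨z₁, haz, hcz⟩, hno⟩ := htr
  have hwy : w ≠ y := fun h => hno ⟨y, ha, hb, h ▸ hcw⟩
  have hzy : z₁ ≠ y := fun h => hno ⟨y, ha, hb, h ▸ hcz⟩
  have haw : ¬ inc0 a w := fun h => hno ⟨w, h, hbw, hcw⟩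
  obtain ⟨e₁, e₂, e₃, h12, h13, h23, q1, q2, q3⟩ := hno2 w
  obtain ⟨d, hdb, hdc, hdw⟩ :=
    pick_one (Pp := fun x => inc0 x w) b c h12 h13 h23 q1 q2 q3
  obtain ⟨n', hdn, han⟩ :=
    hShult b c a d w (triangle_rot ⟨hab', hbc, hac, ⟨y, ha, hb⟩, ⟨w, hbw, hcw⟩,
      ⟨z₁, haz, hcz⟩, hno⟩) hbw hcw hdw
  have hny : n' ≠ y := by
    intro h
    subst h
    rcases hPLS.2.2 d b n' w hdn hb hdw hbw with h | h
    · exact hdb h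
    · exact hwy h.symm
  have hzn : z₁ ≠ n' := by
    intro h
    subst h
    rcases hPLS.2.2 d c z₁ w hdn hcz hdw hcw with h | h
    · exact hdc h
    · exact haw (h ▸ haz)
  exact ⟨w, z₁, n', c, d, hwy, hzy, hny, hzn, haz, han, hbw, hcw, hcz, hdw, hdn⟩

/-- Lemma B: through a point `a` of a line `y` there are two further distinct
lines different from `y`. -/
lemma lemB (hPLS : IsPLS inc0) (hShult : Shultenian inc0)
    (hno2 : ∀ l : L, ∃ a b c : S, a ≠ b ∧ a ≠ c ∧ b ≠ c ∧
      inc0 a l ∧ inc0 b l ∧ inc0 c l)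
    (htri : ∀ a b : S, a ≠ b → Collin inc0 a b → ∃ c, IsTriangle inc0 a b c)
    (htriLn : ∀ l m : L, l ≠ m → (∃ p, inc0 p l ∧ inc0 p m) →
      ∃ n, IsTriangle (fun (x : L) (p : S) => inc0 p x) l m n)
    {a : S} {y : L} (ha : inc0 a y) :
    ∃ z₁ z₂ : L, z₁ ≠ y ∧ z₂ ≠ y ∧ z₁ ≠ z₂ ∧ inc0 a z₁ ∧ inc0 a z₂ := by
  obtain ⟨e₁, e₂, e₃, h12, h13, h23, q1, q2, q3⟩ := hno2 y
  obtain ⟨b, hba, -, hby⟩ := pick_one (Pp := fun x => inc0 x y) a a h12 h13 h23 q1 q2 q3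
  obtain ⟨c, htr⟩ := htri a b (Ne.symm hba) ⟨y, ha, hby⟩
  obtain ⟨hab', hbc, hac, -, -, ⟨z₁, haz, hcz⟩, hno⟩ := htr
  have hzy : z₁ ≠ y := fun h => hno ⟨y, ha, hby, h ▸ hcz⟩
  obtain ⟨n, htrn⟩ := htriLn y z₁ (Ne.symm hzy) ⟨a, ha, haz⟩
  obtain ⟨-, hz₁n, hyn, -, ⟨v, hvz, hvn⟩, ⟨u, huy, hun⟩, hnoL⟩ := htrn
  have hann : ¬ inc0 a n := fun h => hnoL ⟨a, ha, haz, h⟩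
  have hua : u ≠ a := fun h => hann (h ▸ hun)
  have hva : v ≠ a := fun h => hann (h ▸ hvn)
  have huv : u ≠ v := by
    intro h
    subst h
    rcases hPLS.2.2 u a y z₁ huy ha hvz haz with h | h
    · exact hua h
    · exact hzy h.symm
  have htuv : IsTriangle inc0 u v a := by
    refine ⟨huv, hva, hua, ⟨n, hun, hvn⟩, ⟨z₁, hvz, haz⟩, ⟨y, huy, ha⟩, ?_⟩
    rintro ⟨t, hut, hvt, hat⟩
    rcases hPLS.2.2 u a t y hut hat huy ha with h | h
    · exact hua h
    · rcases hPLS.2.2 v a y z₁ (h ▸ hvt) ha hvz haz with h' | h'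
      · exact hva h'
      · exact hzy h'.symm
  obtain ⟨e₁', e₂', e₃', h12', h13', h23', q1', q2', q3'⟩ := hno2 n
  obtain ⟨w, hwu, hwv, hwn⟩ :=
    pick_one (Pp := fun x => inc0 x n) u v h12' h13' h23' q1' q2' q3'
  obtain ⟨z₂, hwz₂, haz₂⟩ := hShult u v a w n htuv hun hvn hwn
  have hz₂y : z₂ ≠ y := by
    intro h
    rcases hPLS.2.2 w u z₂ n hwz₂ (h.symm ▸ huy) hwn hun with h' | h'
    · exact hwu h'
    · exact hann ((h ▸ h') ▸ ha)
  have hz₁z₂ : z₁ ≠ z₂ := by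
    intro h
    rcases hPLS.2.2 w v z₁ n (h.symm ▸ hwz₂) hvz hwn hvn with h' | h'
    · exact hwv h'
    · exact hann (h' ▸ haz)
  exact ⟨z₁, z₂, hzy, hz₂y, hz₁z₂, haz, haz₂⟩

/-- Lemma C: for two distinct lines `w, z` through `s`, there is a point `c ≠ s`
on `z` and two distinct points `b₁, b₂ ≠ s` on `w` each collinear with `c`. -/
lemma lemC (hPLS : IsPLS inc0) (hShult : Shultenian inc0)
    (hno2 : ∀ l : L, ∃ a b c : S, a ≠ b ∧ a ≠ c ∧ b ≠ c ∧
      inc0 a l ∧ inc0 b l ∧ inc0 c l)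
    (htriLn : ∀ l m : L, l ≠ m → (∃ p, inc0 p l ∧ inc0 p m) →
      ∃ n, IsTriangle (fun (x : L) (p : S) => inc0 p x) l m n)
    {s : S} {w z : L} (hwz : w ≠ z) (hsw : inc0 s w) (hsz : inc0 s z) :
    ∃ (c b₁ b₂ : S) (t u : L), c ≠ s ∧ b₁ ≠ s ∧ b₂ ≠ s ∧ b₁ ≠ b₂ ∧
      inc0 c z ∧ inc0 b₁ w ∧ inc0 b₂ w ∧ inc0 c t ∧ inc0 b₁ t ∧ inc0 c u ∧ inc0 b₂ u := by
  obtain ⟨t', htr⟩ := htriLn w z hwz ⟨s, hsw, hsz⟩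
  obtain ⟨-, hzt, hwt, -, ⟨c, hcz, hct⟩, ⟨b₁, hbw, hbt⟩, hnoL⟩ := htr
  have hst : ¬ inc0 s t' := fun h => hnoL ⟨s, hsw, hsz, h⟩
  have hcs : c ≠ s := fun h => hst (h ▸ hct)
  have hbs : b₁ ≠ s := fun h => hst (h ▸ hbt)
  have hcw : ¬ inc0 c w := by
    intro h
    rcases hPLS.2.2 c s w z h hsw hcz hsz with h' | h'
    · exact hcs h'
    · exact hwz h'
  have hcb : b₁ ≠ c := fun h => hcw (h ▸ hbw)
  have htr2 : IsTriangle inc0 b₁ s c := by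
    refine ⟨hbs, hcs.symm, hcb, ⟨w, hbw, hsw⟩, ⟨z, hsz, hcz⟩, ⟨t', hbt, hct⟩, ?_⟩
    rintro ⟨t'', hbt'', hst'', hct''⟩
    rcases hPLS.2.2 b₁ s t'' w hbt'' hst'' hbw hsw with h | h
    · exact hbs h
    · exact hcw (h ▸ hct'')
  obtain ⟨e₁, e₂, e₃, h12, h13, h23, q1, q2, q3⟩ := hno2 w
  obtain ⟨b₂, hb₂s, hb₂b₁, hb₂w⟩ :=
    pick_one (Pp := fun x => inc0 x w) s b₁ h12 h13 h23 q1 q2 q3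
  obtain ⟨u, hb₂u, hcu⟩ := hShult b₁ s c b₂ w htr2 hbw hsw hb₂w
  exact ⟨c, b₁, b₂, t', u, hcs, hbs, hb₂s, fun h => hb₂b₁ h.symm,
    hcz, hbw, hb₂w, hct, hbt, hcu, hb₂u⟩

lemma good_casts {G : Type} [CommRing G] (hG : GoodGroup G) :
    (1 : G) ≠ 0 ∧ (2 : G) ≠ 0 ∧ (3 : G) ≠ 0 := by
  have key : ∀ n : ℕ, 0 < n → n ≤ 3 → (n : G) ≠ 0 := by
    rcases hG with ⟨⟨f⟩⟩ | ⟨k, hk, hke, ⟨f⟩⟩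
    · intro n hn hn3 h
      have h2 : (n : ℤ) = 0 := by rw [← map_natCast f, h, map_zero]
      exact hn.ne' (by exact_mod_cast h2)
    · intro n hn hn3 h
      have h2 : (n : ZMod k) = 0 := by rw [← map_natCast f, h, map_zero]
      have hdvd := (ZMod.natCast_eq_zero_iff n k).mp h2
      obtain ⟨r, hr⟩ := hke
      have := Nat.le_of_dvd hn hdvd
      omega
  refine ⟨?_, ?_, ?_⟩
  · simpa using key 1 one_pos (by norm_num)
  · simpa using key 2 two_pos (by norm_num)
  · simpa using key 3 three_pos (by norm_num)

end Aux

/-- if `M₀` is Shultenian, has no 2-element lines, any two collinear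
points extend to a triangle, and any two intersecting lines extend to a triangle of
lines, then in `⊛_G(∘, M₀)` the relations `⊹₁` and `⊹` coincide. -/
theorem star_dod1_iff_dod {G : Type} [CommRing G] (hG : GoodGroup G)
    {S L : Type} (inc0 : S → L → Prop) (hPLS : IsPLS inc0)
    (hShult : Shultenian inc0)
    (hno2 : ∀ l : L, ∃ a b c : S, a ≠ b ∧ a ≠ c ∧ b ≠ c ∧
      inc0 a l ∧ inc0 b l ∧ inc0 c l)
    (htri : ∀ a b : S, a ≠ b → Collin inc0 a b → ∃ c, IsTriangle inc0 a b c)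
    (htriLn : ∀ l m : L, l ≠ m → (∃ p, inc0 p l ∧ inc0 p m) →
      ∃ n, IsTriangle (fun (x : L) (p : S) => inc0 p x) l m n) :
    ∀ (p : ↥(starPt G S L)) (l : ↥(starLn G S L)),
      dod1 (starInc G inc0) p l ↔ starDod G inc0 p l := by
  obtain ⟨h1, h2, h3⟩ := good_casts hG
  have hgap : ∀ c : G, c ≠ 0 → ∀ u v : G, u = v → u ≠ v + c :=
    fun c hc u v huv h => hc (by linear_combination huv - h)
  intro p l
  constructor
  · rintro ⟨hpl, q, hqp, hql, hq⟩
    rcases hpl with ⟨heq, hdual⟩ | hdod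
    swap
    · exact ⟨Or.inr hdod, hdod.1⟩
    exfalso
    rcases l.2 with ⟨hEj, y, hy⟩ | ⟨hNj, s, hy⟩
    · -- even case : `l = (j, inr y)`
      obtain ⟨a, hpa, hay⟩ := dualInc_left_inr (hy ▸ hdual)
      rcases hql with ⟨hq1, hq2⟩ | ⟨hq1, hq2⟩
      · -- q on the same level
        obtain ⟨b, hqb, hby⟩ := dualInc_left_inr (hy ▸ hq2)
        have hba : b ≠ a := by
          intro h
          apply hqp
          apply Subtype.ext
          apply Prod.ext
          · exact hq1.trans heq.symm
          · rw [hqb, hpa, h]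
        obtain ⟨w, z₁, n', c, d, hwy, hzy, hny, hzn, haz, han, hbw, hcw, hcz, hdw, hdn⟩ :=
          lemA hPLS hShult hno2 htri hba.symm hay hby
        refine hq ⟨(l.val.1, Sum.inr w), Or.inl ⟨hEj, w, rfl⟩⟩
            ⟨(l.val.1, Sum.inr z₁), Or.inl ⟨hEj, z₁, rfl⟩⟩
            ⟨(l.val.1, Sum.inr n'), Or.inl ⟨hEj, n', rfl⟩⟩
            ?_ ?_ ?_ ?_ ?_ ?_ ?_ ?_ ?_
        · intro h
          have h2' := congrArg Prod.snd (congrArg Subtype.val h)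
          rw [hy] at h2'
          simp only [Sum.inr.injEq] at h2'
          exact hwy h2'.symm
        · intro h
          have h2' := congrArg Prod.snd (congrArg Subtype.val h)
          rw [hy] at h2'
          simp only [Sum.inr.injEq] at h2'
          exact hzy h2'.symm
        · intro h
          have h2' := congrArg Prod.snd (congrArg Subtype.val h)
          rw [hy] at h2'
          simp only [Sum.inr.injEq] at h2'
          exact hny h2'.symm
        · intro h
          have h2' := congrArg Prod.snd (congrArg Subtype.val h)
          simp only [Sum.inr.injEq] at h2'
          exact hzn h2'
        · exact Or.inl ⟨hq1, by rw [hqb]; exact hbw⟩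
        · exact Or.inl ⟨heq, by rw [hpa]; exact haz⟩
        · exact Or.inl ⟨heq, by rw [hpa]; exact han⟩
        · exact ⟨⟨(l.val.1, Sum.inl c), Or.inl ⟨hEj, c, rfl⟩⟩,
            Or.inl ⟨rfl, hcw⟩, Or.inl ⟨rfl, hcz⟩⟩
        · exact ⟨⟨(l.val.1, Sum.inl d), Or.inl ⟨hEj, d, rfl⟩⟩,
            Or.inl ⟨rfl, hdw⟩, Or.inl ⟨rfl, hdn⟩⟩
      · -- q is the tip of l
        have hq2' : q.val.2 = Sum.inr y := by rw [hq2, hy]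
        have hNE : ¬ Even (l.val.1 + 1) := by
          rcases q.2 with ⟨hE, a', ha'⟩ | ⟨hN, l', hl'⟩
          · rw [hq2'] at ha'
            simp at ha'
          · rw [← hq1]
            exact hN
        obtain ⟨z₁, z₂, hz1y, hz2y, hz12, haz1, haz2⟩ := lemB hPLS hShult hno2 htri htriLn hay
        refine hq ⟨(l.val.1 + 1, Sum.inl a), Or.inr ⟨hNE, a, rfl⟩⟩
            ⟨(l.val.1, Sum.inr z₁), Or.inl ⟨hEj, z₁, rfl⟩⟩
            ⟨(l.val.1, Sum.inr z₂), Or.inl ⟨hEj, z₂, rfl⟩⟩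
            ?_ ?_ ?_ ?_ ?_ ?_ ?_ ?_ ?_
        · intro h
          have h2' := congrArg Prod.snd (congrArg Subtype.val h)
          rw [hy] at h2'
          simp at h2'
        · intro h
          have h2' := congrArg Prod.snd (congrArg Subtype.val h)
          rw [hy] at h2'
          simp only [Sum.inr.injEq] at h2'
          exact hz1y h2'.symm
        · intro h
          have h2' := congrArg Prod.snd (congrArg Subtype.val h)
          rw [hy] at h2'
          simp only [Sum.inr.injEq] at h2'
          exact hz2y h2'.symm
        · intro h
          have h2' := congrArg Prod.snd (congrArg Subtype.val h)
          simp only [Sum.inr.injEq] at h2'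
          exact hz12 h2'
        · exact Or.inl ⟨hq1, by rw [hq2']; exact hay⟩
        · exact Or.inl ⟨heq, by rw [hpa]; exact haz1⟩
        · exact Or.inl ⟨heq, by rw [hpa]; exact haz2⟩
        · exact ⟨⟨(l.val.1 + 1, Sum.inr z₁), Or.inr ⟨hNE, z₁, rfl⟩⟩,
            Or.inl ⟨rfl, haz1⟩, Or.inr ⟨rfl, rfl⟩⟩
        · exact ⟨⟨(l.val.1 + 1, Sum.inr z₂), Or.inr ⟨hNE, z₂, rfl⟩⟩,
            Or.inl ⟨rfl, haz2⟩, Or.inr ⟨rfl, rfl⟩⟩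
    · -- odd case : `l = (j, inl s)`
      obtain ⟨w, hpw, hsw⟩ := dualInc_left_inl (hy ▸ hdual)
      rcases hql with ⟨hq1, hq2⟩ | ⟨hq1, hq2⟩
      · -- q on the same level
        obtain ⟨z, hqz, hsz⟩ := dualInc_left_inl (hy ▸ hq2)
        have hzw : w ≠ z := by
          intro h
          apply hqp
          exact Subtype.ext (Prod.ext (hq1.trans heq.symm) (by rw [hqz, hpw, h]))
        obtain ⟨c, b₁, b₂, t, u, hcs, hb1s, hb2s, hb12, hcz, hb1w, hb2w, hct, hb1t, hcu, hb2u⟩ :=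
          lemC hPLS hShult hno2 htriLn hzw hsw hsz
        refine hq ⟨(l.val.1, Sum.inl c), Or.inr ⟨hNj, c, rfl⟩⟩
            ⟨(l.val.1, Sum.inl b₁), Or.inr ⟨hNj, b₁, rfl⟩⟩
            ⟨(l.val.1, Sum.inl b₂), Or.inr ⟨hNj, b₂, rfl⟩⟩
            ?_ ?_ ?_ ?_ ?_ ?_ ?_ ?_ ?_
        · intro h
          have h2' := congrArg Prod.snd (congrArg Subtype.val h)
          rw [hy] at h2'
          simp only [Sum.inl.injEq] at h2'
          exact hcs h2'.symm
        · intro h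
          have h2' := congrArg Prod.snd (congrArg Subtype.val h)
          rw [hy] at h2'
          simp only [Sum.inl.injEq] at h2'
          exact hb1s h2'.symm
        · intro h
          have h2' := congrArg Prod.snd (congrArg Subtype.val h)
          rw [hy] at h2'
          simp only [Sum.inl.injEq] at h2'
          exact hb2s h2'.symm
        · intro h
          have h2' := congrArg Prod.snd (congrArg Subtype.val h)
          simp only [Sum.inl.injEq] at h2'
          exact hb12 h2'
        · exact Or.inl ⟨hq1, by rw [hqz]; exact hcz⟩
        · exact Or.inl ⟨heq, by rw [hpw]; exact hb1w⟩
        · exact Or.inl ⟨heq, by rw [hpw]; exact hb2w⟩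
        · exact ⟨⟨(l.val.1, Sum.inr t), Or.inr ⟨hNj, t, rfl⟩⟩,
            Or.inl ⟨rfl, hct⟩, Or.inl ⟨rfl, hb1t⟩⟩
        · exact ⟨⟨(l.val.1, Sum.inr u), Or.inr ⟨hNj, u, rfl⟩⟩,
            Or.inl ⟨rfl, hcu⟩, Or.inl ⟨rfl, hb2u⟩⟩
      · -- q is the tip of l
        have hq2' : q.val.2 = Sum.inl s := by rw [hq2, hy]
        have hE1 : Even (l.val.1 + 1) := by
          rcases q.2 with ⟨hE, a', ha'⟩ | ⟨hN, l', hl'⟩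
          · rw [← hq1]
            exact hE
          · rw [hq2'] at hl'
            simp at hl'
        obtain ⟨e₁, e₂, e₃, h12, h13, h23, q1', q2', q3'⟩ := hno2 w
        obtain ⟨b₁, b₂, hb12, hb1s, hb2s, hb1w, hb2w⟩ :=
          pick_two (Pp := fun x => inc0 x w) s h12 h13 h23 q1' q2' q3'
        refine hq ⟨(l.val.1 + 1, Sum.inr w), Or.inl ⟨hE1, w, rfl⟩⟩
            ⟨(l.val.1, Sum.inl b₁), Or.inr ⟨hNj, b₁, rfl⟩⟩
            ⟨(l.val.1, Sum.inl b₂), Or.inr ⟨hNj, b₂, rfl⟩⟩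
            ?_ ?_ ?_ ?_ ?_ ?_ ?_ ?_ ?_
        · intro h
          have h2' := congrArg Prod.snd (congrArg Subtype.val h)
          rw [hy] at h2'
          simp at h2'
        · intro h
          have h2' := congrArg Prod.snd (congrArg Subtype.val h)
          rw [hy] at h2'
          simp only [Sum.inl.injEq] at h2'
          exact hb1s h2'.symm
        · intro h
          have h2' := congrArg Prod.snd (congrArg Subtype.val h)
          rw [hy] at h2'
          simp only [Sum.inl.injEq] at h2'
          exact hb2s h2'.symm
        · intro h
          have h2' := congrArg Prod.snd (congrArg Subtype.val h)
          simp only [Sum.inl.injEq] at h2'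
          exact hb12 h2'
        · exact Or.inl ⟨hq1, by rw [hq2']; exact hsw⟩
        · exact Or.inl ⟨heq, by rw [hpw]; exact hb1w⟩
        · exact Or.inl ⟨heq, by rw [hpw]; exact hb2w⟩
        · exact ⟨⟨(l.val.1 + 1, Sum.inl b₁), Or.inl ⟨hE1, b₁, rfl⟩⟩,
            Or.inl ⟨rfl, hb1w⟩, Or.inr ⟨rfl, rfl⟩⟩
        · exact ⟨⟨(l.val.1 + 1, Sum.inl b₂), Or.inl ⟨hE1, b₂, rfl⟩⟩,
            Or.inl ⟨rfl, hb2w⟩, Or.inr ⟨rfl, rfl⟩⟩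
  · rintro ⟨hpl, heq⟩
    refine ⟨hpl, ?_⟩
    have hval : p.val.2 = l.val.2 := by
      rcases hpl with ⟨h', _⟩ | ⟨_, hval⟩
      · exact absurd (h'.symm.trans heq) (hgap 1 h1 l.val.1 l.val.1 rfl)
      · exact hval
    rcases l.2 with ⟨hEj, y, hy⟩ | ⟨hNj, s, hy⟩
    · -- even case
      obtain ⟨a, a'', a''', -, -, -, hay, -, -⟩ := hno2 y
      refine ⟨⟨(l.val.1, Sum.inl a), Or.inl ⟨hEj, a, rfl⟩⟩, ?_, ?_, ?_⟩
      · intro h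
        have h2' := congrArg Prod.snd (congrArg Subtype.val h)
        rw [hval, hy] at h2'
        simp at h2'
      · exact Or.inl ⟨rfl, by rw [hy]; exact hay⟩
      · intro k m n hlk hlm hln hmn hqk hpm hpn hkm
        rintro ⟨x2, hx2k, hx2n⟩
        obtain ⟨x1, hx1k, hx1m⟩ := hkm
        have analyze : ∀ m', l ≠ m' → starInc G inc0 p m' →
            m'.val.1 = l.val.1 + 1 ∧ ∃ b, m'.val.2 = Sum.inl b ∧ inc0 b y := by
          intro m' hlm' hpm'
          rcases hpm' with ⟨hm1, hm2⟩ | ⟨hm1, hm2⟩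
          · rw [hval, hy] at hm2
            obtain ⟨b, hb, hby⟩ := dualInc_inr_left hm2
            exact ⟨hm1.symm.trans heq, b, hb, hby⟩
          · exact absurd (Subtype.ext (Prod.ext (add_right_cancel (hm1.symm.trans heq)).symm
              (hm2.symm.trans hval).symm)) hlm'
        obtain ⟨hm1, b, hm2, hby⟩ := analyze m hlm hpm
        obtain ⟨hn1, b', hn2, hb'y⟩ := analyze n hln hpn
        have hbb' : b ≠ b' := by
          intro h
          exact hmn (Subtype.ext (Prod.ext (hm1.trans hn1.symm) (by rw [hm2, hn2, h])))
        rcases hqk with ⟨hk1, hk2⟩ | ⟨hk1, hk2⟩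
        · have hk1' : l.val.1 = k.val.1 := hk1
          have hk2' : dualInc inc0 (Sum.inl a) k.val.2 := hk2
          obtain ⟨z, hkz, haz⟩ := dualInc_inl_left hk2'
          have hzy : z ≠ y := by
            intro h
            exact hlk (Subtype.ext (Prod.ext hk1' (by rw [hy, hkz, h])))
          have key : ∀ (b'' : S) (m'' : ↥(starLn G S L)), m''.val.1 = l.val.1 + 1 →
              m''.val.2 = Sum.inl b'' → ∀ x, starInc G inc0 x k → starInc G inc0 x m'' →
              inc0 b'' z := by
            intro b'' m'' hm1'' hm2'' x hxk hxm
            rcases hxk with ⟨ha1, ha2⟩ | ⟨ha1, ha2⟩ <;> rcases hxm with ⟨hb1, hb2⟩ | ⟨hb1, hb2⟩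
            · exact absurd (hb1.trans hm1'') (hgap 1 h1 _ _ (ha1.trans hk1'.symm))
            · exact absurd (show x.val.1 = l.val.1 + 2 by rw [hb1, hm1'']; ring)
                (hgap 2 h2 _ _ (ha1.trans hk1'.symm))
            · rw [ha2, hkz, hm2''] at hb2
              exact hb2
            · exact absurd (show x.val.1 = l.val.1 + 1 + 1 by rw [hb1, hm1''])
                (hgap 1 h1 _ _ (by rw [ha1, ← hk1']))
          rcases hPLS.2.2 b b' y z hby hb'y (key b m hm1 hm2 x1 hx1k hx1m)
              (key b' n hn1 hn2 x2 hx2k hx2n) with h | h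
          · exact hbb' h
          · exact hzy h.symm
        · have hk1' : l.val.1 = k.val.1 + 1 := hk1
          rcases hx1k with ⟨ha1, ha2⟩ | ⟨ha1, ha2⟩ <;> rcases hx1m with ⟨hb1, hb2⟩ | ⟨hb1, hb2⟩
          · exact absurd (show x1.val.1 = k.val.1 + 2 by rw [hb1, hm1, hk1']; try ring)
              (hgap 2 h2 _ _ ha1)
          · exact absurd (show x1.val.1 = k.val.1 + 3 by rw [hb1, hm1, hk1']; try ring)
              (hgap 3 h3 _ _ ha1)
          · exact absurd (show x1.val.1 = k.val.1 + 1 + 1 by rw [hb1, hm1, hk1']; try ring)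
              (hgap 1 h1 _ _ ha1)
          · exact absurd (show x1.val.1 = k.val.1 + 1 + 2 by rw [hb1, hm1, hk1']; try ring)
              (hgap 2 h2 _ _ ha1)
    · -- odd case
      obtain ⟨z, z', hzz', hsz, hsz'⟩ := hPLS.2.1 s
      refine ⟨⟨(l.val.1, Sum.inr z), Or.inr ⟨hNj, z, rfl⟩⟩, ?_, ?_, ?_⟩
      · intro h
        have h2' := congrArg Prod.snd (congrArg Subtype.val h)
        rw [hval, hy] at h2'
        simp at h2'
      · exact Or.inl ⟨rfl, by rw [hy]; exact hsz⟩
      · intro k m n hlk hlm hln hmn hqk hpm hpn hkm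
        rintro ⟨x2, hx2k, hx2n⟩
        obtain ⟨x1, hx1k, hx1m⟩ := hkm
        have analyze : ∀ m', l ≠ m' → starInc G inc0 p m' →
            m'.val.1 = l.val.1 + 1 ∧ ∃ v, m'.val.2 = Sum.inr v ∧ inc0 s v := by
          intro m' hlm' hpm'
          rcases hpm' with ⟨hm1, hm2⟩ | ⟨hm1, hm2⟩
          · rw [hval, hy] at hm2
            obtain ⟨v, hv, hsv⟩ := dualInc_inl_left hm2
            exact ⟨hm1.symm.trans heq, v, hv, hsv⟩
          · exact absurd (Subtype.ext (Prod.ext (add_right_cancel (hm1.symm.trans heq)).symm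
              (hm2.symm.trans hval).symm)) hlm'
        obtain ⟨hm1, v, hm2, hsv⟩ := analyze m hlm hpm
        obtain ⟨hn1, v', hn2, hsv'⟩ := analyze n hln hpn
        have hvv' : v ≠ v' := by
          intro h
          exact hmn (Subtype.ext (Prod.ext (hm1.trans hn1.symm) (by rw [hm2, hn2, h])))
        rcases hqk with ⟨hk1, hk2⟩ | ⟨hk1, hk2⟩
        · have hk1' : l.val.1 = k.val.1 := hk1
          have hk2' : dualInc inc0 (Sum.inr z) k.val.2 := hk2
          obtain ⟨c, hkc, hcz⟩ := dualInc_inr_left hk2'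
          have hcs : c ≠ s := by
            intro h
            exact hlk (Subtype.ext (Prod.ext hk1' (by rw [hy, hkc, h])))
          have key : ∀ (v'' : L) (m'' : ↥(starLn G S L)), m''.val.1 = l.val.1 + 1 →
              m''.val.2 = Sum.inr v'' → ∀ x, starInc G inc0 x k → starInc G inc0 x m'' →
              inc0 c v'' := by
            intro v'' m'' hm1'' hm2'' x hxk hxm
            rcases hxk with ⟨ha1, ha2⟩ | ⟨ha1, ha2⟩ <;> rcases hxm with ⟨hb1, hb2⟩ | ⟨hb1, hb2⟩
            · exact absurd (hb1.trans hm1'') (hgap 1 h1 _ _ (ha1.trans hk1'.symm))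
            · exact absurd (show x.val.1 = l.val.1 + 2 by rw [hb1, hm1'']; ring)
                (hgap 2 h2 _ _ (ha1.trans hk1'.symm))
            · rw [ha2, hkc, hm2''] at hb2
              exact hb2
            · exact absurd (show x.val.1 = l.val.1 + 1 + 1 by rw [hb1, hm1''])
                (hgap 1 h1 _ _ (by rw [ha1, ← hk1']))
          rcases hPLS.2.2 c s v v' (key v m hm1 hm2 x1 hx1k hx1m) hsv
              (key v' n hn1 hn2 x2 hx2k hx2n) hsv' with h | h
          · exact hcs h
          · exact hvv' h
        · have hk1' : l.val.1 = k.val.1 + 1 := hk1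
          rcases hx1k with ⟨ha1, ha2⟩ | ⟨ha1, ha2⟩ <;> rcases hx1m with ⟨hb1, hb2⟩ | ⟨hb1, hb2⟩
          · exact absurd (show x1.val.1 = k.val.1 + 2 by rw [hb1, hm1, hk1']; try ring)
              (hgap 2 h2 _ _ ha1)
          · exact absurd (show x1.val.1 = k.val.1 + 3 by rw [hb1, hm1, hk1']; try ring)
              (hgap 3 h3 _ _ ha1)
          · exact absurd (show x1.val.1 = k.val.1 + 1 + 1 by rw [hb1, hm1, hk1']; try ring)
              (hgap 1 h1 _ _ ha1)
          · exact absurd (show x1.val.1 = k.val.1 + 1 + 2 by rw [hb1, hm1, hk1']; try ring)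
              (hgap 2 h2 _ _ ha1)
end

section
/- Let M = ⟨M, 𝓛, I⟩ be a connected partial linear space covered by a family {B_i = ⟨B'_i, B''_i⟩ : i ∈ I} of connected closed substructures satisfying conditions (1)–(7), and let ρ be the induced bijection of I. Then for every fixed i₀ ∈ I the map s ↦ ρ^s(i₀) (s ranging over ℤ) is surjective onto I, and it induces a bijection of ℤ onto I if the cyclic group ⟨ρ⟩ generated by ρ is infinite, and a bijection of C_k onto I, where k = |I|, if ⟨ρ⟩ is finite; in other words, the cyclic group ⟨ρ⟩ acts simply transitively on I, so I carries the structure of C_k or ℤ under which j ρ i iff i = j + 1. -/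
/-- in a connected PLS covered by a family of connected closed
substructures satisfying (1)-(7), the cyclic group generated by the bijection `ρ`
acts simply transitively on `I`: for each `i₀`, the orbit map `s ↦ ρ^s(i₀)` is onto
`I` and identifies `I` with `⟨ρ⟩` (that is, with `ℤ` or with `C_k`, `k = |I|`). -/
theorem cover_rho_simply_transitive {M Λ I : Type} (inc : M → Λ → Prop)
    (B' : I → Set M) (B'' : I → Set Λ)
    (hPLS : IsPLS inc) (hconn : ConnectedPLS inc) (hcov : GoodCover inc B' B'')
    (f : Equiv.Perm I) (hf : ∀ j i : I, rhoRel inc B' B'' j i ↔ f j = i) :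
    ∀ i₀ : I, (∀ i : I, ∃ s : ℤ, (f ^ s) i₀ = i) ∧
      (∀ s t : ℤ, (f ^ s) i₀ = (f ^ t) i₀ → f ^ s = f ^ t) := by
  obtain ⟨hcP, hcL, -, -, -, -, h7, h8, -, -, -⟩ := hcov
  -- "same orbit" relation
  set SO : I → I → Prop := fun i j => ∃ s : ℤ, (f ^ s) i = j with hSO
  have so_refl : ∀ i, SO i i := fun i => ⟨0, rfl⟩
  have so_trans : ∀ {i j k}, SO i j → SO j k → SO i k := by
    rintro i j k ⟨s, rfl⟩ ⟨t, rfl⟩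
    exact ⟨t + s, by rw [zpow_add, Equiv.Perm.mul_apply]⟩
  have so_symm : ∀ {i j}, SO i j → SO j i := by
    rintro i j ⟨s, rfl⟩
    refine ⟨-s, ?_⟩
    rw [← Equiv.Perm.mul_apply, ← zpow_add, neg_add_cancel, zpow_zero,
      Equiv.Perm.one_apply]
  have so_step : ∀ {j i}, f j = i → SO j i := by
    rintro j i h
    exact ⟨1, by simpa using h⟩
  -- two indices whose blocks share a point are in the same orbit
  have lemP : ∀ a i i', a ∈ B' i → a ∈ B' i' → SO i i' := by
    intro a i i' hi hi'
    obtain ⟨m, ham, hm⟩ := h7 i a hi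
    obtain ⟨j, hj⟩ := hcL m
    have hji : j ≠ i := fun h => hm (h ▸ hj)
    have hfj : f j = i := (hf j i).1 ⟨hji, m, hj, a, hi, ham⟩
    by_cases hji' : j = i'
    · exact so_symm (so_step (hji' ▸ hfj))
    · have hfj' : f j = i' := (hf j i').1 ⟨hji', m, hj, a, hi', ham⟩
      exact (hfj.symm.trans hfj') ▸ so_refl i
  -- two indices whose blocks share a line are in the same orbit
  have lemL : ∀ l i i', l ∈ B'' i → l ∈ B'' i' → SO i i' := by
    intro l i i' hi hi'
    obtain ⟨d, hdl, hd⟩ := h8 i l hi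
    obtain ⟨j, hj⟩ := hcP d
    have hij : i ≠ j := fun h => hd (h ▸ hj)
    have hfi : f i = j := (hf i j).1 ⟨hij, l, hi, d, hj, hdl⟩
    by_cases hij' : i' = j
    · exact so_step (hfi.trans hij'.symm)
    · have hfi' : f i' = j := (hf i' j).1 ⟨hij', l, hi', d, hj, hdl⟩
      have : i = i' := f.injective (hfi.trans hfi'.symm)
      exact this ▸ so_refl i
  -- "belongs" relation and its basic facts
  set Bel : (M ⊕ Λ) → I → Prop := fun x i => Sum.elim (· ∈ B' i) (· ∈ B'' i) x with hBel
  have belA : ∀ x i i', Bel x i → Bel x i' → SO i i' := by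
    rintro (a | l) i i' hx hx'
    · exact lemP a i i' hx hx'
    · exact lemL l i i' hx hx'
  have belCov : ∀ x : M ⊕ Λ, ∃ i, Bel x i := by
    rintro (a | l)
    · exact hcP a
    · exact hcL l
  -- one incidence step keeps us in the same orbit
  have lemB : ∀ x y, IncStep inc Set.univ Set.univ x y →
      ∀ i j, Bel x i → Bel y j → SO i j := by
    rintro x y ⟨a, l, -, -, hal, (⟨rfl, rfl⟩ | ⟨rfl, rfl⟩)⟩ i j hx hy
    · by_cases hij : i = j
      · exact hij ▸ so_refl i
      · have : f j = i := (hf j i).1 ⟨Ne.symm hij, l, hy, a, hx, hal⟩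
        exact so_symm (so_step this)
    · by_cases hij : i = j
      · exact hij ▸ so_refl i
      · exact so_step ((hf i j).1 ⟨hij, l, hx, a, hy, hal⟩)
  -- chains keep us in the same orbit
  have lemC : ∀ x y, Relation.ReflTransGen (IncStep inc Set.univ Set.univ) x y →
      ∀ i j, Bel x i → Bel y j → SO i j := by
    intro x y h
    induction h with
    | refl => exact fun i j hx hy => belA x i j hx hy
    | tail hxb hstep ih =>
      rename_i b c
      intro i j hx hy
      obtain ⟨k, hbk⟩ := belCov b
      exact so_trans (ih i k hx hbk) (lemB b c hstep k j hbk hy)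
  -- every block has a point
  have hne : ∀ i, ∃ a, a ∈ B' i := by
    intro i
    have : rhoRel inc B' B'' (f.symm i) i := (hf _ i).2 (f.apply_symm_apply i)
    obtain ⟨-, l, -, a, ha, -⟩ := this
    exact ⟨a, ha⟩
  intro i₀
  have surj : ∀ i : I, ∃ s : ℤ, (f ^ s) i₀ = i := by
    intro i
    obtain ⟨a₀, ha₀⟩ := hne i₀
    obtain ⟨a, ha⟩ := hne i
    have hchain := hconn (Sum.inl a₀) (Sum.inl a) (Set.mem_univ a₀) (Set.mem_univ a)
    exact lemC _ _ hchain i₀ i ha₀ ha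
  refine ⟨surj, ?_⟩
  intro s t hst
  refine Equiv.ext fun i => ?_
  obtain ⟨u, hu⟩ := surj i
  rw [← hu]
  calc (f ^ s) ((f ^ u) i₀)
      = (f ^ u) ((f ^ s) i₀) := by
        rw [← Equiv.Perm.mul_apply, ← zpow_add, add_comm, zpow_add, Equiv.Perm.mul_apply]
    _ = (f ^ u) ((f ^ t) i₀) := by rw [hst]
    _ = (f ^ t) ((f ^ u) i₀) := by
        rw [← Equiv.Perm.mul_apply, ← zpow_add, add_comm, zpow_add, Equiv.Perm.mul_apply]
end
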